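/- When N is an integer exceeding 1, the smallest prime exceeding N is the least divisor exceeding 1 of (N!)^((N!)^(N!)) - 1. -/

import Mathlib

theorem next_prime_factorial_superpower (N : ℕ) (hN : 1 < N) :
    sInf {p : ℕ | p.Prime ∧ N < p} =
      sInf {d : ℕ | 1 < d ∧ d ∣ (Nat.factorial N) ^ ((Nat.factorial N) ^ (Nat.factorial N)) - 1} := by
  set F := Nat.factorial N with hFdef
  have hNF : N ≤ F := Nat.self_le_factorial N
  have hF2 : 2 ≤ F := le_trans hN hNF
  have hFpos : 0 < F := by omega
  -- the smallest prime exceeding N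
  obtain ⟨P, hPp, hNP, hP2N⟩ := Nat.exists_prime_lt_and_le_two_mul N (by omega)
  have hne : {p : ℕ | p.Prime ∧ N < p}.Nonempty := ⟨P, hPp, hNP⟩
  set p₀ := sInf {p : ℕ | p.Prime ∧ N < p} with hp₀def
  obtain ⟨hp₀prime, hNp₀⟩ : p₀.Prime ∧ N < p₀ := Nat.sInf_mem hne
  have hp₀le : p₀ ≤ 2 * N := le_trans (Nat.sInf_le ⟨hPp, hNP⟩) hP2N
  -- p₀ - 1 divides F ^ F
  have hdvdFF : p₀ - 1 ∣ F ^ F := by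
    have h1 : p₀ - 1 ≠ 0 := by have := hp₀prime.one_lt; omega
    have h2 : F ^ F ≠ 0 := pow_ne_zero _ (by omega)
    rw [← Nat.factorization_le_iff_dvd h1 h2]
    intro q
    by_cases hq : (p₀ - 1).factorization q = 0
    · simp [hq]
    · have hqmem : q ∈ (p₀ - 1).primeFactors := by
        rw [← Nat.support_factorization]; exact Finsupp.mem_support_iff.mpr hq
      have hqprime : q.Prime := Nat.prime_of_mem_primeFactors hqmem
      have hqdvd : q ∣ p₀ - 1 := Nat.dvd_of_mem_primeFactors hqmem
      -- q ≤ N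
      have hqN : q ≤ N := by
        by_contra hqN
        push_neg at hqN
        have : p₀ ≤ q := Nat.sInf_le ⟨hqprime, hqN⟩
        have : q ≤ p₀ - 1 := Nat.le_of_dvd (by have := hp₀prime.one_lt; omega) hqdvd
        omega
      set a := (p₀ - 1).factorization q with hadef
      have hqa : q ^ a ∣ p₀ - 1 := Nat.ordProj_dvd _ _
      have hqale : q ^ a ≤ p₀ - 1 :=
        Nat.le_of_dvd (by have := hp₀prime.one_lt; omega) hqa
      have h2a : 2 ^ a ≤ q ^ a := Nat.pow_le_pow_left hqprime.two_le a
      have h2N : 2 * N ≤ 2 ^ N := by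
        have := Nat.lt_two_pow_self (n := N - 1)
        calc 2 * N ≤ 2 * 2 ^ (N - 1) := by omega
        _ = 2 ^ (N - 1 + 1) := by ring
        _ = 2 ^ N := by congr 1; omega
      have haN : a < N := by
        have : 2 ^ a < 2 ^ N := by omega
        exact (Nat.pow_lt_pow_iff_right (by norm_num)).mp this
      -- RHS
      have hqF : q ∣ F := Nat.dvd_factorial hqprime.pos hqN
      have hF1 : 1 ≤ F.factorization q := by
        rw [← hqprime.pow_dvd_iff_le_factorization (by omega), pow_one]
        exact hqF
      rw [Nat.factorization_pow]
      simp only [Finsupp.smul_apply, smul_eq_mul]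
      calc a ≤ N := le_of_lt haN
      _ ≤ F := hNF
      _ ≤ F * F.factorization q := Nat.le_mul_of_pos_right _ (by omega)
  -- p₀ divides F ^ (F ^ F) - 1
  have hp₀dvd : p₀ ∣ F ^ (F ^ F) - 1 := by
    have hcop : Nat.Coprime F p₀ := by
      rw [Nat.coprime_comm]
      exact hp₀prime.coprime_iff_not_dvd.mpr (by
        rw [hFdef, Nat.Prime.dvd_factorial hp₀prime]; omega)
    have heuler : F ^ (p₀ - 1) ≡ 1 [MOD p₀] := by
      have := Nat.ModEq.pow_totient hcop
      rwa [Nat.totient_prime hp₀prime] at this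
    obtain ⟨k, hk⟩ := hdvdFF
    have : F ^ (F ^ F) ≡ 1 [MOD p₀] := by
      rw [hk, pow_mul]
      calc (F ^ (p₀ - 1)) ^ k ≡ 1 ^ k [MOD p₀] := heuler.pow k
      _ = 1 := one_pow k
    have h1le : 1 ≤ F ^ (F ^ F) := Nat.one_le_pow _ _ hFpos
    exact (Nat.modEq_iff_dvd' h1le).mp this.symm
  -- conclusion
  apply le_antisymm
  · apply le_csInf
    · exact ⟨p₀, hp₀prime.one_lt, hp₀dvd⟩
    · rintro d ⟨hd1, hddvd⟩
      have hdne : d ≠ 1 := by omega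
      have hqprime := Nat.minFac_prime hdne
      have hqdvd : d.minFac ∣ F ^ (F ^ F) - 1 := (Nat.minFac_dvd d).trans hddvd
      have hNq : N < d.minFac := by
        by_contra hle
        push_neg at hle
        have hqF : d.minFac ∣ F := Nat.dvd_factorial hqprime.pos hle
        have h1 : d.minFac ∣ F ^ (F ^ F) :=
          hqF.trans (dvd_pow_self F (Nat.pos_of_ne_zero (pow_ne_zero _ (by omega))).ne')
        have h1le : 1 ≤ F ^ (F ^ F) := Nat.one_le_pow _ _ hFpos
        have hsub : F ^ (F ^ F) - (F ^ (F ^ F) - 1) = 1 := by omega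
        have : d.minFac ∣ 1 := hsub ▸ Nat.dvd_sub h1 hqdvd
        have := Nat.le_of_dvd one_pos this
        have := hqprime.two_le
        omega
      calc p₀ ≤ d.minFac := Nat.sInf_le ⟨hqprime, hNq⟩
      _ ≤ d := Nat.minFac_le (by omega)
  · exact Nat.sInf_le ⟨hp₀prime.one_lt, hp₀dvd⟩
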